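/- arXiv:1307.4261 — 5 statements merged into one kernel-verified Lean document; each statement's English description precedes it below -/
import Mathlib

section
/- Let R be a commutative ring and f : X → Y a homomorphism of R-modules with finite kernel and finite cokernel. For any r ∈ R, the induced map f_{/r} : X/rX → Y/rY satisfies #Ker(f_{/r}) ≤ #Ker(f) · #Coker(f) and #Coker(f_{/r}) ≤ #Coker(f). -/
/-- Let `R` be a commutative ring and `f : X → Y` a homomorphism of
`R`-modules with finite kernel and finite cokernel.  For any `r ∈ R`, the induced map
`f_{/r} : X/rX → Y/rY` satisfies `#Ker(f_{/r}) ≤ #Ker(f) · #Coker(f)` and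
`#Coker(f_{/r}) ≤ #Coker(f)`. -/
theorem stmt0 {R X Y : Type*} [CommRing R] [AddCommGroup X] [Module R X]
    [AddCommGroup Y] [Module R Y] (f : X →ₗ[R] Y)
    (hker : Finite (LinearMap.ker f)) (hcoker : Finite (Y ⧸ LinearMap.range f)) (r : R)
    (fr : (X ⧸ LinearMap.range (r • (LinearMap.id : X →ₗ[R] X))) →ₗ[R]
      (Y ⧸ LinearMap.range (r • (LinearMap.id : Y →ₗ[R] Y))))
    (hfr : fr = Submodule.mapQ _ _ f (by
      rintro _ ⟨x, rfl⟩
      exact ⟨f x, by simp⟩)) :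
    Nat.card (LinearMap.ker fr) ≤
      Nat.card (LinearMap.ker f) * Nat.card (Y ⧸ LinearMap.range f) ∧
    Nat.card ((Y ⧸ LinearMap.range (r • (LinearMap.id : Y →ₗ[R] Y))) ⧸ LinearMap.range fr) ≤
      Nat.card (Y ⧸ LinearMap.range f) := by
  classical
  have hfr' : ∀ x : X, fr (Submodule.Quotient.mk x) = Submodule.Quotient.mk (f x) := by
    intro x; rw [hfr, Submodule.mapQ_apply]
  set rN : Submodule R Y :=
    Submodule.map (r • (LinearMap.id : Y →ₗ[R] Y)) (LinearMap.range f) with hrNdef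
  -- the map Φ : X/rX → Y/rN
  have hXN : LinearMap.range (r • (LinearMap.id : X →ₗ[R] X)) ≤ Submodule.comap f rN := by
    rintro _ ⟨x, rfl⟩
    exact ⟨f x, ⟨x, rfl⟩, by simp⟩
  set Φ := Submodule.mapQ _ rN f hXN with hΦdef
  -- the map ψ : Y/N → Y/rN induced by multiplication by r
  have hNr : LinearMap.range f ≤
      Submodule.comap (r • (LinearMap.id : Y →ₗ[R] Y)) rN := by
    intro y hy; exact ⟨y, hy, rfl⟩
  set ψ := Submodule.mapQ _ rN (r • (LinearMap.id : Y →ₗ[R] Y)) hNr with hψdef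
  set φ := Φ.domRestrict (LinearMap.ker fr) with hφdef
  -- surjection from ker f onto ker φ
  have hkerφ : Function.Surjective (fun k : LinearMap.ker f =>
      (⟨⟨Submodule.Quotient.mk k.1, by
          simp [LinearMap.mem_ker, hfr' k.1, (k.2 : f k.1 = 0)]⟩, by
        simp [hφdef, hΦdef, Submodule.mapQ_apply, (k.2 : f k.1 = 0)]⟩ :
        LinearMap.ker φ)) := by
    rintro ⟨⟨q, hq⟩, h0⟩
    obtain ⟨x, rfl⟩ := Submodule.Quotient.mk_surjective _ q
    have h0' : Submodule.Quotient.mk (p := rN) (f x) = 0 := by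
      simpa [hφdef, hΦdef, Submodule.mapQ_apply] using h0
    rw [Submodule.Quotient.mk_eq_zero] at h0'
    obtain ⟨y, hy, hyx⟩ := h0'
    obtain ⟨x', rfl⟩ := hy
    simp only [LinearMap.smul_apply, LinearMap.id_coe, id_eq] at hyx
    refine ⟨⟨x - r • x', ?_⟩, ?_⟩
    · simp [LinearMap.mem_ker, map_sub, map_smul, hyx]
    · ext
      simp only [Submodule.coe_subtype]
      rw [Submodule.Quotient.mk_sub]
      have hz : (Submodule.Quotient.mk (p := LinearMap.range
          (r • (LinearMap.id : X →ₗ[R] X))) (r • x')) = 0 := by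
        rw [Submodule.Quotient.mk_eq_zero]
        exact ⟨x', by simp⟩
      rw [hz, sub_zero]
  have finkerφ : Finite (LinearMap.ker φ) := Finite.of_surjective _ hkerφ
  -- range φ ≤ range ψ
  have hrange : LinearMap.range φ ≤ LinearMap.range ψ := by
    rintro _ ⟨⟨q, hq⟩, rfl⟩
    obtain ⟨x, rfl⟩ := Submodule.Quotient.mk_surjective _ q
    have hq' : Submodule.Quotient.mk (p := LinearMap.range
        (r • (LinearMap.id : Y →ₗ[R] Y))) (f x) = 0 := by
      rw [← hfr' x]; exact hq
    rw [Submodule.Quotient.mk_eq_zero] at hq'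
    obtain ⟨y, hy⟩ := hq'
    simp only [LinearMap.smul_apply, LinearMap.id_coe, id_eq] at hy
    refine ⟨Submodule.Quotient.mk y, ?_⟩
    simp only [hψdef, hφdef, hΦdef, Submodule.mapQ_apply, LinearMap.domRestrict_apply,
      LinearMap.smul_apply, LinearMap.id_coe, id_eq, hy]
  have finrangeψ : Finite (LinearMap.range ψ) :=
    Finite.of_surjective _ ψ.surjective_rangeRestrict
  have finrangeφ : Finite (LinearMap.range φ) := Finite.Set.subset _ hrange
  -- kernel bound pieces
  have h1 : Nat.card (LinearMap.ker fr) =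
      Nat.card (LinearMap.ker φ) * Nat.card ((LinearMap.ker fr) ⧸ LinearMap.ker φ) :=
    Submodule.card_eq_card_quotient_mul_card _
  have h2 : Nat.card ((LinearMap.ker fr) ⧸ LinearMap.ker φ) = Nat.card (LinearMap.range φ) :=
    Nat.card_congr φ.quotKerEquivRange.toEquiv
  have h3 : Nat.card (LinearMap.ker φ) ≤ Nat.card (LinearMap.ker f) :=
    Nat.card_le_card_of_surjective _ hkerφ
  have h4 : Nat.card (LinearMap.range φ) ≤ Nat.card (LinearMap.range ψ) :=
    Nat.card_le_card_of_injective _ (Submodule.inclusion_injective hrange)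
  have h5 : Nat.card (LinearMap.range ψ) ≤ Nat.card (Y ⧸ LinearMap.range f) :=
    Nat.card_le_card_of_surjective _ ψ.surjective_rangeRestrict
  constructor
  · rw [h1, h2]
    exact Nat.mul_le_mul h3 (h4.trans h5)
  -- cokernel bound
  · have hle : LinearMap.range f ≤
        LinearMap.ker ((LinearMap.range fr).mkQ ∘ₗ
          (LinearMap.range (r • (LinearMap.id : Y →ₗ[R] Y))).mkQ) := by
      rintro _ ⟨x, rfl⟩
      simp only [LinearMap.mem_ker, LinearMap.comp_apply, Submodule.mkQ_apply]
      rw [← hfr' x, ← Submodule.mkQ_apply, Submodule.mkQ_apply, Submodule.Quotient.mk_eq_zero]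
      exact ⟨Submodule.Quotient.mk x, rfl⟩
    have hπsurj : Function.Surjective ((LinearMap.range f).liftQ _ hle) := by
      intro q
      obtain ⟨q', rfl⟩ := Submodule.Quotient.mk_surjective _ q
      obtain ⟨y, rfl⟩ := Submodule.Quotient.mk_surjective _ q'
      exact ⟨Submodule.Quotient.mk y, rfl⟩
    exact Nat.card_le_card_of_surjective _ hπsurj
end

section
/- Let R be a commutative ring and f : X → Y a homomorphism of R-modules with finite kernel and finite cokernel. For any r ∈ R, the induced map f_{[r]} : X[r] → Y[r] on r-torsion submodules satisfies #Ker(f_{[r]}) ≤ #Ker(f) and #Coker(f_{[r]}) ≤ #Ker(f) · #Coker(f). -/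
/-- Let `R` be a commutative ring and `f : X → Y` a homomorphism of
`R`-modules with finite kernel and finite cokernel.  For any `r ∈ R`, the induced map
`f_{[r]} : X[r] → Y[r]` on `r`-torsion submodules satisfies `#Ker(f_{[r]}) ≤ #Ker(f)` and
`#Coker(f_{[r]}) ≤ #Ker(f) · #Coker(f)`. -/
theorem stmt1 {R X Y : Type*} [CommRing R] [AddCommGroup X] [Module R X]
    [AddCommGroup Y] [Module R Y] (f : X →ₗ[R] Y)
    (hker : Finite (LinearMap.ker f)) (hcoker : Finite (Y ⧸ LinearMap.range f)) (r : R)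
    (frt : (LinearMap.ker (r • (LinearMap.id : X →ₗ[R] X))) →ₗ[R]
      (LinearMap.ker (r • (LinearMap.id : Y →ₗ[R] Y))))
    (hfrt : frt = f.restrict (p := LinearMap.ker (r • (LinearMap.id : X →ₗ[R] X)))
      (q := LinearMap.ker (r • (LinearMap.id : Y →ₗ[R] Y))) (by
        intro x hx
        simp only [LinearMap.mem_ker, LinearMap.smul_apply, LinearMap.id_coe, id_eq] at hx ⊢
        rw [← map_smul, hx, map_zero])) :
    Nat.card (LinearMap.ker frt) ≤ Nat.card (LinearMap.ker f) ∧
    Nat.card ((LinearMap.ker (r • (LinearMap.id : Y →ₗ[R] Y))) ⧸ LinearMap.range frt) ≤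
      Nat.card (LinearMap.ker f) * Nat.card (Y ⧸ LinearMap.range f) := by
  classical
  have hfrt_apply : ∀ x : LinearMap.ker (r • (LinearMap.id : X →ₗ[R] X)),
      ((frt x : LinearMap.ker (r • (LinearMap.id : Y →ₗ[R] Y))) : Y) = f (x : X) := by
    intro x; rw [hfrt]; rfl
  have hmemXr : ∀ x : X, x ∈ LinearMap.ker (r • (LinearMap.id : X →ₗ[R] X)) ↔ r • x = 0 := by
    intro x; simp [LinearMap.mem_ker]
  have hmemYr : ∀ y : Y, y ∈ LinearMap.ker (r • (LinearMap.id : Y →ₗ[R] Y)) ↔ r • y = 0 := by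
    intro y; simp [LinearMap.mem_ker]
  constructor
  · -- part 1
    have hj : Function.Injective
        (fun z : LinearMap.ker frt => (⟨((z : _) : X), by
          have h2 : ((frt z.1 : _) : Y) = 0 := by
            rw [LinearMap.mem_ker.mp z.2]; rfl
          rw [hfrt_apply] at h2
          exact LinearMap.mem_ker.mpr h2⟩ : LinearMap.ker f)) := by
      intro a b hab
      beta_reduce at hab
      rw [Subtype.mk.injEq] at hab
      exact Subtype.ext (Subtype.ext hab)
    exact Nat.card_le_card_of_injective _ hj
  · -- part 2
    haveI := hker
    haveI := hcoker
    set g := Submodule.liftQ (LinearMap.range frt)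
        (((LinearMap.range f).mkQ).comp
          (LinearMap.ker (r • (LinearMap.id : Y →ₗ[R] Y))).subtype)
        (by rintro y ⟨x, rfl⟩
            simp only [LinearMap.mem_ker, LinearMap.comp_apply, Submodule.subtype_apply,
              Submodule.mkQ_apply, Submodule.Quotient.mk_eq_zero]
            exact ⟨(x : X), (hfrt_apply x).symm⟩) with hgdef
    have hgmk : ∀ y : LinearMap.ker (r • (LinearMap.id : Y →ₗ[R] Y)),
        g (Submodule.Quotient.mk y) = Submodule.Quotient.mk (y : Y) := by
      intro y
      rw [hgdef, Submodule.liftQ_apply]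
      rfl
    obtain ⟨sec, hsec⟩ := Classical.axiomOfChoice
      (Submodule.Quotient.mk_surjective (LinearMap.range frt))
    have hφex : ∀ c : (LinearMap.ker (r • (LinearMap.id : Y →ₗ[R] Y))) ⧸ LinearMap.range frt,
        g c = 0 → ∃ k : LinearMap.ker f, ∃ x : X,
          f x = ((sec c : _) : Y) ∧ r • x = (k : X) := by
      intro c hc
      rw [← hsec c, hgmk, Submodule.Quotient.mk_eq_zero] at hc
      obtain ⟨x, hx⟩ := hc
      refine ⟨⟨r • x, ?_⟩, x, hx, rfl⟩
      rw [LinearMap.mem_ker, map_smul, hx]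
      exact (hmemYr _).mp (sec c).2
    choose φ xof hxf hxr using hφex
    have hφinj : ∀ c₁ c₂ (h₁ : g c₁ = 0) (h₂ : g c₂ = 0), φ c₁ h₁ = φ c₂ h₂ → c₁ = c₂ := by
      intro c₁ c₂ h₁ h₂ hφ
      have hrx : r • xof c₁ h₁ = r • xof c₂ h₂ := by
        rw [hxr c₁ h₁, hxr c₂ h₂, hφ]
      have hz : xof c₁ h₁ - xof c₂ h₂ ∈
          LinearMap.ker (r • (LinearMap.id : X →ₗ[R] X)) := by
        rw [hmemXr, smul_sub, hrx, sub_self]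
      have hmem : sec c₁ - sec c₂ ∈ LinearMap.range frt := by
        refine ⟨⟨_, hz⟩, ?_⟩
        apply Subtype.ext
        rw [hfrt_apply]
        show f (xof c₁ h₁ - xof c₂ h₂) = _
        rw [map_sub, hxf c₁ h₁, hxf c₂ h₂]
        rfl
      rw [← hsec c₁, ← hsec c₂]
      exact (Submodule.Quotient.eq _).mpr hmem
    set s : (Y ⧸ LinearMap.range f) →
        ((LinearMap.ker (r • (LinearMap.id : Y →ₗ[R] Y))) ⧸ LinearMap.range frt) :=
      fun v => if h : ∃ c, g c = v then h.choose else 0 with hsdef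
    have hs : ∀ c, g (s (g c)) = g c := by
      intro c
      have h : ∃ c', g c' = g c := ⟨c, rfl⟩
      rw [hsdef]
      simp only [dif_pos h]
      exact h.choose_spec
    have hF : Function.Injective
        (fun c : (LinearMap.ker (r • (LinearMap.id : Y →ₗ[R] Y))) ⧸ LinearMap.range frt =>
          ((φ (c - s (g c)) (by rw [map_sub, hs, sub_self]), g c) :
            (LinearMap.ker f) × (Y ⧸ LinearMap.range f))) := by
      intro c₁ c₂ hc
      beta_reduce at hc
      rw [Prod.mk.injEq] at hc
      obtain ⟨h1, h2⟩ := hc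
      have h3 := hφinj _ _ _ _ h1
      have h4 : s (g c₁) = s (g c₂) := by rw [h2]
      have h5 : c₁ - s (g c₁) = c₂ - s (g c₁) := by rw [h3, h4]
      exact sub_left_injective.eq_iff.mp h5
    calc Nat.card ((LinearMap.ker (r • (LinearMap.id : Y →ₗ[R] Y))) ⧸ LinearMap.range frt)
        ≤ Nat.card ((LinearMap.ker f) × (Y ⧸ LinearMap.range f)) :=
          Nat.card_le_card_of_injective _ hF
      _ = Nat.card (LinearMap.ker f) * Nat.card (Y ⧸ LinearMap.range f) := Nat.card_prod _ _
end

section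
/- Let A be an abelian group containing a finite-index subgroup isomorphic to Z_l^n (the n-th power of the l-adic integers) for a prime l and n ≥ 0. Then for every m ≥ 1, the quotient A/l^m A and the torsion subgroup A[l^m] are finite, and #(A/l^m A) = l^{m n} · #A[l^m]. -/
open AddSubgroup

private lemma padic_smul_eq (l : ℕ) [Fact l.Prime] (m : ℕ) (y : ℤ_[l]) :
    (l ^ m : ℕ) • y = ((l : ℤ_[l]) ^ m) * y := by
  rw [nsmul_eq_mul]; push_cast; ring

private lemma padic_index (l : ℕ) [Fact l.Prime] (m : ℕ) :
    (AddMonoidHom.range ((l ^ m : ℕ) • (AddMonoidHom.id ℤ_[l]))).index = l ^ m := by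
  have hl : l.Prime := Fact.out
  haveI : NeZero (l ^ m) := ⟨pow_ne_zero m hl.ne_zero⟩
  set φ : ℤ_[l] →+* ZMod (l ^ m) := PadicInt.toZModPow m with hφ
  have hsurj : Function.Surjective φ.toAddMonoidHom := fun z =>
    ⟨((z.val : ℕ) : ℤ_[l]), by
      show φ _ = z
      rw [map_natCast]; exact ZMod.natCast_rightInverse z⟩
  have hker : AddMonoidHom.range ((l ^ m : ℕ) • (AddMonoidHom.id ℤ_[l]))
      = AddMonoidHom.ker φ.toAddMonoidHom := by
    ext x
    simp only [AddMonoidHom.mem_range, AddMonoidHom.mem_ker, AddMonoidHom.smul_apply,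
      AddMonoidHom.id_apply]
    constructor
    · rintro ⟨y, rfl⟩
      show φ _ = 0
      have : (l ^ m : ℕ) • y ∈ RingHom.ker φ := by
        rw [hφ, PadicInt.ker_toZModPow, padic_smul_eq]
        exact Ideal.mul_mem_right _ _ (Ideal.subset_span rfl)
      exact this
    · intro hx
      have : x ∈ Ideal.span {(l : ℤ_[l]) ^ m} := by
        rw [← PadicInt.ker_toZModPow]; exact hx
      obtain ⟨y, rfl⟩ := Ideal.mem_span_singleton.mp this
      exact ⟨y, padic_smul_eq l m y⟩
  rw [hker]
  have : (AddMonoidHom.ker φ.toAddMonoidHom).index = Nat.card (ZMod (l ^ m)) :=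
    Nat.card_congr (QuotientAddGroup.quotientKerEquivOfSurjective φ.toAddMonoidHom hsurj).toEquiv
  rw [this, Nat.card_zmod]

/-- Let `A` be an abelian group containing a finite-index subgroup
isomorphic to `ℤ_l^n` for a prime `l` and `n ≥ 0`.  Then for every `m ≥ 1` the quotient
`A/l^m A` and the torsion subgroup `A[l^m]` are finite, and
`#(A/l^m A) = l^{m n} · #A[l^m]`. -/
theorem stmt2 {A : Type*} [AddCommGroup A] (l : ℕ) [Fact l.Prime] (n m : ℕ) (hm : 1 ≤ m)
    (H : AddSubgroup A) (hfin : H.index ≠ 0) (e : H ≃+ (Fin n → ℤ_[l])) :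
    Finite (A ⧸ (AddMonoidHom.range ((l ^ m : ℕ) • (AddMonoidHom.id A)))) ∧
    Finite (AddMonoidHom.ker ((l ^ m : ℕ) • (AddMonoidHom.id A))) ∧
    Nat.card (A ⧸ (AddMonoidHom.range ((l ^ m : ℕ) • (AddMonoidHom.id A)))) =
      l ^ (m * n) * Nat.card (AddMonoidHom.ker ((l ^ m : ℕ) • (AddMonoidHom.id A))) := by
  classical
  have hl : l.Prime := Fact.out
  set f : A →+ A := (l ^ m : ℕ) • (AddMonoidHom.id A) with hfdef
  have hfx : ∀ x : A, f x = (l ^ m : ℕ) • x := fun x => rfl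
  -- torsion-freeness of the target
  have htf : ∀ v : Fin n → ℤ_[l], (l ^ m : ℕ) • v = 0 → v = 0 := by
    intro v hv
    funext i
    have h1 : (l ^ m : ℕ) • v i = 0 := congrFun hv i
    rw [nsmul_eq_mul] at h1
    rcases mul_eq_zero.mp h1 with h | h
    · exact absurd h (Nat.cast_ne_zero.mpr (pow_ne_zero m hl.ne_zero))
    · exact h
  -- ker f ∩ H = 0
  have hinf : ∀ x : A, x ∈ f.ker → x ∈ H → x = 0 := by
    intro x hxk hxH
    have h0 : ((l ^ m : ℕ) • (⟨x, hxH⟩ : H) : H) = 0 := by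
      apply Subtype.ext
      simpa [hfx] using (AddMonoidHom.mem_ker.mp hxk)
    have h1 : (l ^ m : ℕ) • e ⟨x, hxH⟩ = 0 := by rw [← map_nsmul, h0, map_zero]
    have h2 : (⟨x, hxH⟩ : H) = 0 := by
      apply e.injective; rw [htf _ h1, map_zero]
    exact congrArg Subtype.val h2
  haveI hAHfin : Finite (A ⧸ H) := Nat.finite_of_card_ne_zero hfin
  haveI hkerfin : Finite f.ker := by
    have hinj : Function.Injective fun x : f.ker => ((x : A) : A ⧸ H) := by
      rintro ⟨x, hx⟩ ⟨y, hy⟩ hxy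
      have hH : -x + y ∈ H := (QuotientAddGroup.eq).mp hxy
      have hk : -x + y ∈ f.ker := add_mem (neg_mem hx) hy
      exact Subtype.ext (neg_add_eq_zero.mp (hinf _ hk hH))
    exact Finite.of_injective _ hinj
  set NH : AddSubgroup A := H.map f with hNHdef
  have hNH_le_H : NH ≤ H := by
    rintro _ ⟨a, ha, rfl⟩
    simpa [hfx] using nsmul_mem ha (l ^ m)
  have hNH_le_range : NH ≤ f.range := by
    rintro _ ⟨a, ha, rfl⟩; exact ⟨a, rfl⟩
  -- the relindex computation
  have hrel : NH.relIndex H = l ^ (m * n) := by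
    have h1 : NH.addSubgroupOf H = AddMonoidHom.range ((l ^ m : ℕ) • (AddMonoidHom.id H)) := by
      ext x
      simp only [mem_addSubgroupOf, hNHdef, mem_map, AddMonoidHom.mem_range,
        AddMonoidHom.smul_apply, AddMonoidHom.id_apply]
      constructor
      · rintro ⟨a, ha, hax⟩
        refine ⟨⟨a, ha⟩, ?_⟩
        apply Subtype.ext
        simpa [hfx] using hax
      · rintro ⟨y, hy⟩
        exact ⟨y, y.2, by simpa [hfx] using congrArg Subtype.val hy⟩
    have h2 : (NH.addSubgroupOf H).map (e : H →+ (Fin n → ℤ_[l]))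
        = AddMonoidHom.range ((l ^ m : ℕ) • (AddMonoidHom.id (Fin n → ℤ_[l]))) := by
      rw [h1]; ext v
      simp only [mem_map, AddMonoidHom.mem_range, AddMonoidHom.smul_apply,
        AddMonoidHom.id_apply]
      constructor
      · rintro ⟨_, ⟨y, rfl⟩, rfl⟩
        exact ⟨e y, by simp [map_nsmul]⟩
      · rintro ⟨w, rfl⟩
        exact ⟨(l ^ m : ℕ) • e.symm w, ⟨e.symm w, rfl⟩, by
          simp [map_nsmul]⟩
    have h3 : AddMonoidHom.range ((l ^ m : ℕ) • (AddMonoidHom.id (Fin n → ℤ_[l])))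
        = AddSubgroup.pi Set.univ (fun _ : Fin n =>
            AddMonoidHom.range ((l ^ m : ℕ) • (AddMonoidHom.id ℤ_[l]))) := by
      ext v
      simp only [AddMonoidHom.mem_range, mem_pi, Set.mem_univ, true_implies,
        AddMonoidHom.smul_apply, AddMonoidHom.id_apply]
      constructor
      · rintro ⟨w, rfl⟩ i
        exact ⟨w i, rfl⟩
      · intro h
        choose w hw using h
        exact ⟨w, by funext i; exact hw i⟩
    have hcard : Nat.card (H ⧸ NH.addSubgroupOf H)
        = Nat.card ((Fin n → ℤ_[l]) ⧸
            AddMonoidHom.range ((l ^ m : ℕ) • (AddMonoidHom.id (Fin n → ℤ_[l])))) :=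
      Nat.card_congr (QuotientAddGroup.congr (NH.addSubgroupOf H) _ e h2).toEquiv
    calc NH.relIndex H
        = Nat.card ((Fin n → ℤ_[l]) ⧸
            AddMonoidHom.range ((l ^ m : ℕ) • (AddMonoidHom.id (Fin n → ℤ_[l])))) := hcard
      _ = (AddMonoidHom.range ((l ^ m : ℕ) • (AddMonoidHom.id (Fin n → ℤ_[l])))).index := rfl
      _ = ∏ _i : Fin n, (AddMonoidHom.range ((l ^ m : ℕ) • (AddMonoidHom.id ℤ_[l]))).index := by
          rw [h3, index_pi]
      _ = l ^ (m * n) := by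
          rw [padic_index]
          simp [Finset.prod_const, ← pow_mul]
  -- relindex of NH in range f equals the index of J = H ⊔ ker f
  set J : AddSubgroup A := H ⊔ f.ker with hJdef
  have hmem : ∀ x : A, f x ∈ NH ↔ x ∈ J := by
    intro x
    constructor
    · rintro ⟨a, ha, hax⟩
      refine mem_sup.mpr ⟨a, ha, x - a, ?_, by abel⟩
      rw [AddMonoidHom.mem_ker, map_sub, hax, sub_self]
    · intro hx
      obtain ⟨y, hy, z, hz, rfl⟩ := mem_sup.mp hx
      refine ⟨y, hy, ?_⟩
      rw [map_add, AddMonoidHom.mem_ker.mp hz, add_zero]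
  have hcomap : (NH.addSubgroupOf f.range).comap f.rangeRestrict = J := by
    ext x
    rw [mem_comap, mem_addSubgroupOf]
    exact hmem x
  have h_iii : NH.relIndex f.range = J.index := by
    rw [← hcomap]
    exact ((NH.addSubgroupOf f.range).index_comap_of_surjective
      f.rangeRestrict_surjective).symm
  -- relindex of H in J equals card of ker f
  have h_iv : H.relIndex J = Nat.card f.ker := by
    have hbot : H.addSubgroupOf f.ker = ⊥ := by
      ext x
      simp only [mem_addSubgroupOf, AddSubgroup.mem_bot]
      constructor
      · intro hx
        exact Subtype.ext (hinf x x.2 hx)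
      · rintro rfl; exact H.zero_mem
    have e2 := QuotientAddGroup.quotientInfEquivSumNormalQuotient f.ker H
    have hcard1 : Nat.card (↥f.ker ⧸ H.addSubgroupOf f.ker) = Nat.card f.ker := by
      rw [hbot]
      exact Nat.card_congr (QuotientAddGroup.quotientBot (G := f.ker)).toEquiv
    have hcard2 := Nat.card_congr e2.toEquiv
    rw [hJdef, sup_comm H f.ker]
    exact hcard2.symm.trans hcard1
  -- index arithmetic
  have hA1 : NH.relIndex H * H.index = NH.index := relIndex_mul_index hNH_le_H
  have hA2 : NH.relIndex f.range * f.range.index = NH.index := relIndex_mul_index hNH_le_range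
  have hA3 : H.relIndex J * J.index = H.index := relIndex_mul_index le_sup_left
  have hJne : J.index ≠ 0 := fun h0 => hfin (by rw [← hA3, h0, mul_zero])
  have hNHindex : NH.index = l ^ (m * n) * H.index := by rw [← hA1, hrel]
  have key : f.range.index = l ^ (m * n) * Nat.card f.ker := by
    have hL : J.index * f.range.index = NH.index := by rw [← hA2, h_iii]
    have hR : NH.index = J.index * (l ^ (m * n) * Nat.card f.ker) := by
      rw [hNHindex, ← hA3, ← h_iv]; ring
    exact Nat.eq_of_mul_eq_mul_left (Nat.pos_of_ne_zero hJne) (by rw [hL, hR])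
  have hNHne : NH.index ≠ 0 := by
    rw [hNHindex]
    exact Nat.mul_ne_zero (pow_ne_zero _ hl.ne_zero) hfin
  have hrange_ne : f.range.index ≠ 0 := fun h0 =>
    hNHne (Nat.eq_zero_of_zero_dvd (h0 ▸ AddSubgroup.index_dvd_of_le hNH_le_range))
  exact ⟨Nat.finite_of_card_ne_zero hrange_ne, hkerfin, key⟩
end

section
/- Let 0 → A' → A → A'' → 0 be a short exact sequence of abelian groups in which the map A → A'' is surjective with kernel K that is uniquely divisible by l^m (i.e., multiplication by l^m is bijective on K). If A'' is finite, then #(A/l^m A) = #A[l^m]. -/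
/-- Let `0 → K → A → A'' → 0` be a short exact sequence of abelian groups
in which `A → A''` is surjective with kernel `K` uniquely divisible by `l^m` (multiplication
by `l^m` is bijective on `K`).  If `A''` is finite, then `#(A/l^m A) = #A[l^m]`. -/
theorem stmt4 {A A'' : Type*} [AddCommGroup A] [AddCommGroup A''] (l : ℕ) [Fact l.Prime]
    (m : ℕ) (hm : 1 ≤ m) (π : A →+ A'') (hsurj : Function.Surjective π)
    (hdiv : Function.Bijective
      (fun x : AddMonoidHom.ker π => (l ^ m : ℕ) • x))
    (hfin : Finite A'') :
    Nat.card (A ⧸ (AddMonoidHom.range ((l ^ m : ℕ) • (AddMonoidHom.id A)))) =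
      Nat.card (AddMonoidHom.ker ((l ^ m : ℕ) • (AddMonoidHom.id A))) := by
  classical
  set n := l ^ m with hn
  set f : A →+ A := (n : ℕ) • AddMonoidHom.id A with hf
  set g : A'' →+ A'' := (n : ℕ) • AddMonoidHom.id A'' with hg
  have hfa : ∀ a : A, f a = n • a := fun a => rfl
  have hga : ∀ a : A'', g a = n • a := fun a => rfl
  -- Step 1: kernels are isomorphic
  have hker : Nat.card f.ker = Nat.card g.ker := by
    have hmem : ∀ a : f.ker, π a ∈ g.ker := by
      rintro ⟨a, ha⟩
      simp only [AddMonoidHom.mem_ker, hfa] at ha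
      simp [AddMonoidHom.mem_ker, hga, ← map_nsmul, ha]
    refine Nat.card_congr (Equiv.ofBijective (fun a => ⟨π a, hmem a⟩) ⟨?_, ?_⟩)
    · rintro ⟨a, ha⟩ ⟨b, hb⟩ hab
      simp only [Subtype.mk.injEq] at hab
      have hK : a - b ∈ π.ker := by simp [AddMonoidHom.mem_ker, hab]
      have : (n • (⟨a - b, hK⟩ : π.ker) : π.ker) = n • (0 : π.ker) := by
        apply Subtype.ext
        simp only [AddMonoidHom.mem_ker, hfa] at ha hb
        push_cast [smul_sub]
        simp [ha, hb]
      have := hdiv.1 this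
      have : a - b = 0 := congrArg Subtype.val this
      ext
      exact sub_eq_zero.mp this
    · rintro ⟨a'', ha''⟩
      obtain ⟨a, rfl⟩ := hsurj a''
      simp only [AddMonoidHom.mem_ker, hga] at ha''
      have hna : n • a ∈ π.ker := by simp [AddMonoidHom.mem_ker, map_nsmul, ha'']
      obtain ⟨k, hk⟩ := hdiv.2 ⟨n • a, hna⟩
      have hk' : n • (k : A) = n • a := congrArg Subtype.val hk
      refine ⟨⟨a - k, ?_⟩, ?_⟩
      · simp [AddMonoidHom.mem_ker, hfa, smul_sub, hk']
      · apply Subtype.ext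
        have : π (k : A) = 0 := k.2
        simp [this]
  -- Step 2: cokernels are isomorphic
  have hle : f.range ≤ g.range.comap π := by
    rintro _ ⟨a, rfl⟩
    exact ⟨π a, by simp [hga, hfa, map_nsmul]⟩
  set ψ := QuotientAddGroup.map f.range g.range π hle with hψ
  have hcoker : Nat.card (A ⧸ f.range) = Nat.card (A'' ⧸ g.range) := by
    refine Nat.card_congr (Equiv.ofBijective ψ ⟨?_, ?_⟩)
    · rw [injective_iff_map_eq_zero]
      intro x hx
      induction x using QuotientAddGroup.induction_on with
      | H a =>
        rw [hψ, QuotientAddGroup.map_mk] at hx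
        have : π a ∈ g.range := (QuotientAddGroup.eq_zero_iff _).mp hx
        obtain ⟨b'', hb''⟩ := this
        obtain ⟨b, rfl⟩ := hsurj b''
        have hkmem : a - n • b ∈ π.ker := by
          simp only [hga] at hb''
          simp [AddMonoidHom.mem_ker, map_nsmul, hb'']
        obtain ⟨k, hk⟩ := hdiv.2 ⟨a - n • b, hkmem⟩
        have hk' : n • (k : A) = a - n • b := congrArg Subtype.val hk
        have : a ∈ f.range := ⟨(k : A) + b, by
          simp [hfa, smul_add, hk']⟩
        exact (QuotientAddGroup.eq_zero_iff _).mpr this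
    · intro y
      induction y using QuotientAddGroup.induction_on with
      | H a'' =>
        obtain ⟨a, rfl⟩ := hsurj a''
        exact ⟨QuotientAddGroup.mk a, by rw [hψ, QuotientAddGroup.map_mk]⟩
  -- Step 3: on the finite group A'', #coker = #ker
  have hfin' : Nat.card (A'' ⧸ g.range) = Nat.card g.ker := by
    have h1 : Nat.card A'' = Nat.card (A'' ⧸ g.range) * Nat.card g.range :=
      AddSubgroup.card_eq_card_quotient_mul_card_addSubgroup g.range
    have h2 : Nat.card A'' = Nat.card (A'' ⧸ g.ker) * Nat.card g.ker :=
      AddSubgroup.card_eq_card_quotient_mul_card_addSubgroup g.ker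
    have h3 : Nat.card (A'' ⧸ g.ker) = Nat.card g.range :=
      Nat.card_congr (QuotientAddGroup.quotientKerEquivRange g).toEquiv
    have hpos : 0 < Nat.card g.range := Nat.card_pos
    rw [h3] at h2
    rw [h1, mul_comm] at h2
    exact Nat.eq_of_mul_eq_mul_left hpos h2
  rw [hcoker, hfin', hker]
end

section
/- Let X be a finitely generated module over Λ = Z_p[[T]] that is pseudo-isomorphic to Λ^ρ ⊕ ⊕_s Λ/f_s^{l_s}Λ ⊕ ⊕_t Λ/p^{m_t}Λ, where each f_s is a distinguished (monic, ≡ T^{deg f_s} mod p) polynomial. Then for all m, n ≥ 0, #(X/(p^m, (T+1)^{p^n} − 1)X) equals p^{(ρ m + Σ_t min(m_t, m)) p^n} up to a multiplicative constant depending only on X and m (independent of n). -/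
namespace Stmt14Aux

open PowerSeries

variable {p : ℕ} [Fact p.Prime]

local notation "R" => PowerSeries ℤ_[p]

lemma L0 (g : R) (h : ∀ i, (p:ℤ_[p]) ∣ (PowerSeries.coeff i) g) :
    ∃ ε : R, g = C (p:ℤ_[p]) * ε := by
  refine ⟨PowerSeries.mk fun i => (h i).choose, ?_⟩
  ext i
  rw [coeff_C_mul, coeff_mk]
  exact (h i).choose_spec

lemma coeff_add_one_pow (N i : ℕ) :
    (PowerSeries.coeff i) ((X + 1) ^ N) = if i ≤ N then (N.choose i : ℤ_[p]) else 0 := by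
  rw [add_pow]
  rw [map_sum]
  have : ∀ k ∈ Finset.range (N+1),
      (PowerSeries.coeff i) (X ^ k * 1 ^ (N - k) * (N.choose k : R))
        = if k = i then (N.choose k : ℤ_[p]) else 0 := by
    intro k _
    rw [one_pow, mul_one]
    have : (N.choose k : R) = C ((N.choose k : ℤ_[p])) := by
      simp [map_natCast]
    rw [this, mul_comm, coeff_C_mul, coeff_X_pow]
    split <;> simp_all [eq_comm]
  rw [Finset.sum_congr rfl this, Finset.sum_ite_eq' (Finset.range (N+1)) i
    (fun k => (N.choose k : ℤ_[p]))]
  simp [Nat.lt_succ_iff]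

lemma L1 (n : ℕ) : ∃ ε : R, ((X + 1) ^ (p ^ n) - 1 : R) = X ^ (p ^ n) + C (p:ℤ_[p]) * ε := by
  have hdvd : ∀ i, (p:ℤ_[p]) ∣ (PowerSeries.coeff i) (((X + 1) ^ (p ^ n) - 1 : R) - X ^ (p ^ n)) := by
    intro i
    have hp : p.Prime := Fact.out
    rw [map_sub, map_sub, coeff_add_one_pow, coeff_X_pow, coeff_one]
    rcases Nat.lt_trichotomy i (p ^ n) with h | h | h
    · rcases Nat.eq_zero_or_pos i with rfl | hi
      · simp [(pow_pos hp.pos n).ne]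
      · have : i ≤ p ^ n := h.le
        simp only [this, if_pos, if_neg h.ne, if_neg hi.ne']
        simpa using Nat.cast_dvd_cast (hp.dvd_choose_pow hi.ne' h.ne)
    · subst h
      simp [hp.ne_zero]
    · have hi : i ≠ 0 := by have := pow_pos hp.pos n; omega
      simp [h.not_ge, hi, h.ne']
  obtain ⟨ε, hε⟩ := L0 _ hdvd
  exact ⟨ε, by linear_combination hε⟩

lemma L1b (f : Polynomial ℤ_[p]) (hf : f.Monic)
    (hd : ∀ i < f.natDegree, (p : ℤ_[p]) ∣ f.coeff i) :
    ∃ ε : R, (f : R) = X ^ f.natDegree + C (p:ℤ_[p]) * ε := by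
  have hdvd : ∀ i, (p:ℤ_[p]) ∣ (PowerSeries.coeff i) ((f : R) - X ^ f.natDegree) := by
    intro i
    rw [map_sub, Polynomial.coeff_coe, coeff_X_pow]
    rcases Nat.lt_trichotomy i f.natDegree with h | h | h
    · simpa [h.ne] using hd i h
    · subst h
      simp [hf.coeff_natDegree]
    · simp [Polynomial.coeff_eq_zero_of_natDegree_lt h, h.ne']
  obtain ⟨ε, hε⟩ := L0 _ hdvd
  exact ⟨ε, by linear_combination hε⟩

lemma L1c (g ε : R) (a : ℕ) (hg : g = X ^ a + C (p:ℤ_[p]) * ε) (l : ℕ) :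
    ∃ ε' : R, g ^ l = X ^ (a * l) + C (p:ℤ_[p]) * ε' := by
  induction l with
  | zero => exact ⟨0, by simp⟩
  | succ l ih =>
    obtain ⟨ε', hε'⟩ := ih
    refine ⟨ε' * X ^ a + X ^ (a * l) * ε + C (p:ℤ_[p]) * (ε' * ε), ?_⟩
    rw [pow_succ, hε', hg, Nat.mul_succ, pow_add]
    ring

lemma coeff_finsum (d : ℕ) (c : Fin d → ℤ_[p]) (l : ℕ) :
    (PowerSeries.coeff l) (∑ i : Fin d, C (c i) * X ^ (i:ℕ)) =
      if h : l < d then c ⟨l, h⟩ else 0 := by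
  rw [map_sum]
  have : ∀ i : Fin d, (PowerSeries.coeff l) (C (c i) * X ^ (i:ℕ)) =
      if (i:ℕ) = l then c i else 0 := by
    intro i
    rw [coeff_C_mul, coeff_X_pow]
    split <;> simp_all [eq_comm]
  rw [Finset.sum_congr rfl fun i _ => this i]
  by_cases h : l < d
  · rw [dif_pos h, Finset.sum_eq_single (⟨l, h⟩ : Fin d)]
    · simp
    · intro b _ hb
      exact if_neg fun hbl => hb (Fin.ext hbl)
    · intro habs
      exact absurd (Finset.mem_univ _) habs
  · rw [dif_neg h, Finset.sum_eq_zero]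
    intro i _
    refine if_neg fun hil => h ?_
    rw [← hil]
    exact i.isLt

lemma trunc_decomp (d : ℕ) (a : R) :
    ∃ g : R, a = (∑ i : Fin d, C ((PowerSeries.coeff (i:ℕ)) a) * X ^ (i:ℕ)) + X ^ d * g := by
  have hdvd : (X : R) ^ d ∣ a - ∑ i : Fin d, C ((PowerSeries.coeff (i:ℕ)) a) * X ^ (i:ℕ) := by
    rw [X_pow_dvd_iff]
    intro j hj
    rw [map_sub, coeff_finsum, dif_pos hj, sub_self]
  obtain ⟨g, hg⟩ := hdvd
  exact ⟨g, by linear_combination hg⟩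

lemma exists_repr (d k : ℕ) (ε : R) (f : R) :
    ∃ (c : Fin d → ℤ_[p]) (a h : R),
      f = (∑ i : Fin d, C (c i) * X ^ (i:ℕ)) + (p:R) ^ k * a
          + (X ^ d + C (p:ℤ_[p]) * ε) * h := by
  induction k with
  | zero => exact ⟨0, f, 0, by simp⟩
  | succ k ih =>
    obtain ⟨c, a, h, hrepr⟩ := ih
    obtain ⟨g, hg⟩ := trunc_decomp d a
    refine ⟨fun i => c i + (p:ℤ_[p]) ^ k * (PowerSeries.coeff (i:ℕ)) a,
      -(ε * g), h + (p:R) ^ k * g, ?_⟩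
    have hpC : ((p:R)) = C (p:ℤ_[p]) := by simp [map_natCast]
    have hsum : (∑ i : Fin d, C (c i + (p:ℤ_[p]) ^ k * (PowerSeries.coeff (i:ℕ)) a)
          * X ^ (i:ℕ))
        = (∑ i : Fin d, C (c i) * X ^ (i:ℕ))
          + (p:R) ^ k * (∑ i : Fin d, C ((PowerSeries.coeff (i:ℕ)) a) * X ^ (i:ℕ)) := by
      rw [Finset.mul_sum, ← Finset.sum_add_distrib]
      refine Finset.sum_congr rfl fun i _ => ?_
      rw [map_add, add_mul, map_mul, map_pow, ← hpC]
      ring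
    rw [hpC] at hrepr hsum ⊢
    linear_combination hrepr + (C (p:ℤ_[p])) ^ k * hg - hsum

lemma pPowC (k : ℕ) : ((p:R)) ^ k = C ((p:ℤ_[p]) ^ k) := by
  rw [map_pow, map_natCast]

lemma dvd_of_repr (d : ℕ) (ε : R) : ∀ (k : ℕ) (c : Fin d → ℤ_[p]) (u v : R),
    (∑ i : Fin d, C (c i) * X ^ (i:ℕ))
      = u * (p:R) ^ k + v * (X ^ d + C (p:ℤ_[p]) * ε) →
    ∀ i, (p:ℤ_[p]) ^ k ∣ c i := by
  intro k
  induction k with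
  | zero => intro c u v _ i; simp
  | succ k ih =>
    intro c u v heq i
    have hp : p.Prime := Fact.out
    have hv : ∀ j, (p:ℤ_[p]) ∣ (PowerSeries.coeff j) v := by
      intro j
      have h0 : (PowerSeries.coeff (j + d)) (∑ i : Fin d, C (c i) * X ^ (i:ℕ)) = 0 := by
        rw [coeff_finsum]; exact dif_neg (by omega)
      rw [heq, map_add, mul_comm u, pPowC, coeff_C_mul, mul_add, map_add,
        PowerSeries.coeff_mul_X_pow,
        show v * (C (p:ℤ_[p]) * ε) = C (p:ℤ_[p]) * (v * ε) by ring,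
        coeff_C_mul] at h0
      exact ⟨-((p:ℤ_[p]) ^ k * (PowerSeries.coeff (j + d)) u
        + (PowerSeries.coeff (j + d)) (v * ε)), by linear_combination h0⟩
    obtain ⟨v', hv'⟩ := L0 v hv
    have hci : ∀ i : Fin d, (p:ℤ_[p]) ∣ c i := by
      intro i
      have h0 : (PowerSeries.coeff (i:ℕ)) (∑ i : Fin d, C (c i) * X ^ (i:ℕ)) = c i := by
        rw [coeff_finsum, dif_pos i.isLt]
      rw [heq, map_add, mul_comm u, pPowC, coeff_C_mul, hv',
        show C (p:ℤ_[p]) * v' * (X ^ d + C (p:ℤ_[p]) * ε)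
          = C (p:ℤ_[p]) * (v' * (X ^ d + C (p:ℤ_[p]) * ε)) by ring,
        coeff_C_mul] at h0
      exact ⟨(p:ℤ_[p]) ^ k * (PowerSeries.coeff (i:ℕ)) u
        + (PowerSeries.coeff (i:ℕ)) (v' * (X ^ d + C (p:ℤ_[p]) * ε)), by
          linear_combination -h0⟩
    choose c' hc' using hci
    have hq : (∑ i : Fin d, C (c i) * X ^ (i:ℕ))
        = C (p:ℤ_[p]) * ∑ i : Fin d, C (c' i) * X ^ (i:ℕ) := by
      rw [Finset.mul_sum]
      refine Finset.sum_congr rfl fun i _ => ?_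
      rw [hc' i, map_mul]
      ring
    have hCp : (C (p:ℤ_[p])) ≠ 0 := by
      have h2 : ((p:ℤ_[p])) ≠ 0 := Nat.cast_ne_zero.mpr hp.ne_zero
      exact fun hC => h2 (by simpa using congrArg (PowerSeries.constantCoeff) hC)
    have hkey : C (p:ℤ_[p]) * (∑ i : Fin d, C (c' i) * X ^ (i:ℕ))
        = C (p:ℤ_[p]) * (u * (p:R) ^ k + v' * (X ^ d + C (p:ℤ_[p]) * ε)) := by
      rw [pPowC, map_pow] at heq
      rw [pPowC, map_pow]
      linear_combination heq - hq + (X ^ d + C (p:ℤ_[p]) * ε) * hv'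
    have hfin := ih c' u v' (mul_left_cancel₀ hCp hkey)
    obtain ⟨w, hw⟩ := hfin i
    exact ⟨w, by rw [hc' i, hw, pow_succ]; ring⟩

/-- The quotient of `ℤ_[p][[X]]` by `(p^k, X^d + pε)` is equivalent to `(ZMod (p^k))^d`. -/
lemma quot_equiv (d k : ℕ) (ε : R) :
    Nonempty ((R ⧸ Ideal.span {(p:R) ^ k, X ^ d + C (p:ℤ_[p]) * ε})
      ≃ (Fin d → ZMod (p ^ k))) := by
  have hp : p.Prime := Fact.out
  set ω : R := X ^ d + C (p:ℤ_[p]) * ε with hω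
  set J : Ideal R := Ideal.span {(p:R) ^ k, ω} with hJ
  set π : (Fin d → ℤ_[p]) → R ⧸ J :=
    fun c => Ideal.Quotient.mk J (∑ i : Fin d, C (c i) * X ^ (i:ℕ)) with hπ
  set τ : (Fin d → ℤ_[p]) → (Fin d → ZMod (p ^ k)) :=
    fun c i => PadicInt.toZModPow k (c i) with hτ
  have hpkJ : ((p:R) ^ k) ∈ J := Ideal.subset_span (by simp)
  have hωJ : ω ∈ J := Ideal.subset_span (by simp)
  have hdiff : ∀ c : Fin d → ℤ_[p],
      (∑ i : Fin d, C (c i) * X ^ (i:ℕ)) ∈ J ↔ ∀ i, (p:ℤ_[p]) ^ k ∣ c i := by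
    intro c
    constructor
    · intro hc
      obtain ⟨u, v, huv⟩ := Ideal.mem_span_pair.mp hc
      exact dvd_of_repr d ε k c u v huv.symm
    · intro hc
      choose e he using hc
      have : (∑ i : Fin d, C (c i) * X ^ (i:ℕ))
          = (p:R) ^ k * ∑ i : Fin d, C (e i) * X ^ (i:ℕ) := by
        rw [Finset.mul_sum]
        refine Finset.sum_congr rfl fun i _ => ?_
        rw [he i, map_mul, pPowC]
        ring
      rw [this]
      exact Ideal.mul_mem_right _ _ hpkJ
  have hπτ : ∀ c c', π c = π c' ↔ τ c = τ c' := by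
    intro c c'
    rw [hπ, hτ]
    simp only [Ideal.Quotient.eq]
    have hsub : (∑ i : Fin d, C (c i) * X ^ (i:ℕ))
        - (∑ i : Fin d, C (c' i) * X ^ (i:ℕ))
        = ∑ i : Fin d, C (c i - c' i) * X ^ (i:ℕ) := by
      rw [← Finset.sum_sub_distrib]
      refine Finset.sum_congr rfl fun i _ => ?_
      rw [map_sub]
      ring
    rw [hsub, hdiff, funext_iff]
    refine forall_congr' fun i => ?_
    rw [← sub_eq_zero, ← map_sub, ← RingHom.mem_ker, PadicInt.ker_toZModPow,
      Ideal.mem_span_singleton]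
  have hπs : Function.Surjective π := by
    intro y
    obtain ⟨x, rfl⟩ := Ideal.Quotient.mk_surjective y
    obtain ⟨c, a, h, hrepr⟩ := exists_repr d k ε x
    refine ⟨c, ?_⟩
    rw [hπ, Ideal.Quotient.eq, hrepr]
    have : (∑ i : Fin d, C (c i) * X ^ (i:ℕ))
        - ((∑ i : Fin d, C (c i) * X ^ (i:ℕ)) + (p:R) ^ k * a + ω * h)
        = -((p:R) ^ k * a + ω * h) := by ring
    rw [this]
    exact neg_mem (add_mem (Ideal.mul_mem_right _ _ hpkJ) (Ideal.mul_mem_right _ _ hωJ))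
  haveI : NeZero (p ^ k) := ⟨pow_ne_zero _ hp.ne_zero⟩
  have hτs : Function.Surjective τ := by
    intro z
    refine ⟨fun i => ((z i).val : ℤ_[p]), funext fun i => ?_⟩
    rw [hτ]
    simp only [map_natCast]
    exact ZMod.natCast_zmod_val (z i)
  refine ⟨(Equiv.ofBijective (fun z => π (Function.surjInv hτs z)) ⟨?_, ?_⟩).symm⟩
  · intro z z' hzz
    have := (hπτ _ _).mp hzz
    rwa [Function.surjInv_eq hτs, Function.surjInv_eq hτs] at this
  · intro y
    obtain ⟨c, rfl⟩ := hπs y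
    exact ⟨τ c, ((hπτ _ _).mpr (Function.surjInv_eq hτs (τ c))).symm ▸ rfl⟩

lemma quot_finite (d k : ℕ) (ε : R) :
    Finite (R ⧸ Ideal.span {(p:R) ^ k, X ^ d + C (p:ℤ_[p]) * ε}) := by
  haveI : NeZero (p ^ k) := ⟨pow_ne_zero _ (Fact.out : p.Prime).ne_zero⟩
  obtain ⟨e⟩ := quot_equiv d k ε
  exact Finite.of_equiv _ e.symm

lemma quot_card (d k : ℕ) (ε : R) :
    Nat.card (R ⧸ Ideal.span {(p:R) ^ k, X ^ d + C (p:ℤ_[p]) * ε}) = p ^ (k * d) := by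
  obtain ⟨e⟩ := quot_equiv d k ε
  rw [Nat.card_congr e, Nat.card_fun, Nat.card_zmod, Nat.card_eq_fintype_card,
    Fintype.card_fin, ← pow_mul]


lemma span_sup_singleton (x y z : R) :
    (Ideal.span {x, y} ⊔ Ideal.span {z} : Ideal R) = Ideal.span {x, y, z} := by
  rw [← Ideal.span_union]
  congr 1
  ext w
  simp only [Set.mem_union, Set.mem_insert_iff, Set.mem_singleton_iff]
  tauto

lemma span_three_pow (m mtt : ℕ) (ω : R) :
    (Ideal.span {(p:R)^m, ω, (p:R)^mtt} : Ideal R)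
      = Ideal.span {(p:R)^(min mtt m), ω} := by
  refine le_antisymm (Ideal.span_le.2 ?_) (Ideal.span_le.2 ?_)
  · rintro g hg
    simp only [Set.mem_insert_iff, Set.mem_singleton_iff] at hg
    rcases hg with rfl | rfl | rfl
    · obtain ⟨w, hw⟩ := pow_dvd_pow (p:R) (min_le_right mtt m)
      rw [hw]
      exact Ideal.mul_mem_right _ _ (Ideal.subset_span (by simp))
    · exact Ideal.subset_span (by simp)
    · obtain ⟨w, hw⟩ := pow_dvd_pow (p:R) (min_le_left mtt m)
      rw [hw]
      exact Ideal.mul_mem_right _ _ (Ideal.subset_span (by simp))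
  · rintro g hg
    simp only [Set.mem_insert_iff, Set.mem_singleton_iff] at hg
    rcases hg with rfl | rfl
    · rcases min_choice mtt m with h | h <;> rw [h] <;>
        exact Ideal.subset_span (by simp)
    · exact Ideal.subset_span (by simp)


end Stmt14Aux
section counting
variable {Rg : Type*} [CommRing Rg] {A B : Type*} [AddCommGroup A] [AddCommGroup B]
  [Module Rg A] [Module Rg B]

lemma mk_out {S : Submodule Rg A} (c : A ⧸ S) : Submodule.Quotient.mk c.out = c := by
  conv_rhs => rw [← Quotient.out_eq c]
  rfl

/-- Lagrange-type decomposition for a submodule. -/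
noncomputable def lagrangeEquiv (S : Submodule Rg A) : A ≃ (A ⧸ S) × S where
  toFun a := (Submodule.Quotient.mk a,
    ⟨a - (Submodule.Quotient.mk (p := S) a).out,
      (Submodule.Quotient.eq S).mp (by rw [mk_out])⟩)
  invFun cs := cs.1.out + cs.2.1
  left_inv a := by simp
  right_inv := by
    rintro ⟨c, s, hs⟩
    have h1 : Submodule.Quotient.mk (p := S) (c.out + s) = c := by
      rw [Submodule.Quotient.mk_add, (Submodule.Quotient.mk_eq_zero _).mpr hs, add_zero, mk_out]
    refine Prod.ext h1 (Subtype.ext ?_)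
    simp only
    rw [h1]
    abel

lemma card_eq_card_quotient_mul_card (S : Submodule Rg A) :
    Nat.card A = Nat.card (A ⧸ S) * Nat.card S := by
  rw [Nat.card_congr (lagrangeEquiv S), Nat.card_prod]

/-- `#A ≤ #ker f * #B` -/
lemma card_le_ker_mul_card (f : A →ₗ[Rg] B) [Finite B] [Finite A] :
    Nat.card A ≤ Nat.card (LinearMap.ker f) * Nat.card B := by
  rw [card_eq_card_quotient_mul_card (LinearMap.ker f), mul_comm]
  refine Nat.mul_le_mul le_rfl ?_
  rw [Nat.card_congr f.quotKerEquivRange.toEquiv]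
  exact Nat.card_le_card_of_injective _ Subtype.val_injective

/-- `#B ≤ #coker f * #A` -/
lemma card_le_coker_mul_card (f : A →ₗ[Rg] B) [Finite B] [Finite A] :
    Nat.card B ≤ Nat.card (B ⧸ LinearMap.range f) * Nat.card A := by
  rw [card_eq_card_quotient_mul_card (LinearMap.range f)]
  refine Nat.mul_le_mul le_rfl ?_
  exact Nat.card_le_card_of_surjective _ f.surjective_rangeRestrict

end counting

section glue
variable {Rg : Type*} [CommRing Rg]

lemma smul_top_ideal (I : Ideal Rg) : I • (⊤ : Submodule Rg Rg) = I := by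
  refine le_antisymm (Submodule.smul_le.2 fun r hr x _ => ?_) fun a ha => ?_
  · simpa [smul_eq_mul] using I.mul_mem_right x hr
  · simpa using Submodule.smul_mem_smul ha (Submodule.mem_top (R := Rg) (M := Rg) (x := 1))

lemma smul_quot_eq_zero (J : Ideal Rg) {r : Rg} (hr : r ∈ J) (x : Rg ⧸ J) : r • x = 0 := by
  obtain ⟨z, rfl⟩ := Submodule.Quotient.mk_surjective _ x
  rw [← Submodule.Quotient.mk_smul, Submodule.Quotient.mk_eq_zero]
  simpa [smul_eq_mul] using J.mul_mem_right z hr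

lemma smul_top_quot (I J : Ideal Rg) :
    I • (⊤ : Submodule Rg (Rg ⧸ J)) = Submodule.map J.mkQ I := by
  have := Submodule.map_smul'' I (⊤ : Submodule Rg Rg) J.mkQ
  rwa [Submodule.map_top, Submodule.range_mkQ, smul_top_ideal,
    eq_comm] at this

variable {ι : Type*} [Fintype ι] [DecidableEq ι]
  (Ms : ι → Type*) [∀ i, AddCommGroup (Ms i)] [∀ i, Module Rg (Ms i)]

lemma smul_top_pi (I : Ideal Rg) :
    I • (⊤ : Submodule Rg (Π i, Ms i)) = Submodule.pi Set.univ (fun i => I • ⊤) := by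
  refine le_antisymm (Submodule.smul_le.2 fun r hr x _ => ?_) fun x hx => ?_
  · intro i _
    exact Submodule.smul_mem_smul hr trivial
  · rw [← Finset.univ_sum_single x]
    refine Submodule.sum_mem _ fun i _ => ?_
    refine Submodule.smul_induction_on (hx i trivial)
      (fun r hr z _ => ?_) (fun y z hy hz => ?_)
    · rw [Pi.single_smul]
      exact Submodule.smul_mem_smul hr trivial
    · rw [Pi.single_add]
      exact Submodule.add_mem _ hy hz

variable {A B : Type*} [AddCommGroup A] [AddCommGroup B] [Module Rg A] [Module Rg B]

lemma smul_top_prod (I : Ideal Rg) :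
    I • (⊤ : Submodule Rg (A × B)) = (I • (⊤ : Submodule Rg A)).prod (I • ⊤) := by
  refine le_antisymm (Submodule.smul_le.2 fun r hr x _ => ?_) fun x hx => ?_
  · exact ⟨Submodule.smul_mem_smul hr trivial, Submodule.smul_mem_smul hr trivial⟩
  · obtain ⟨h1, h2⟩ := hx
    have e : x = (x.1, (0:B)) + ((0:A), x.2) := by simp
    rw [e]
    refine Submodule.add_mem _ ?_ ?_
    · refine Submodule.smul_induction_on h1 (fun r hr z _ => ?_) (fun y z hy hz => ?_)
      · have : ((r • z, (0:B)) : A × B) = r • (z, (0:B)) := by simp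
        rw [this]
        exact Submodule.smul_mem_smul hr trivial
      · have : ((y + z, (0:B)) : A × B) = (y, (0:B)) + (z, (0:B)) := by simp
        rw [this]
        exact Submodule.add_mem _ hy hz
    · refine Submodule.smul_induction_on h2 (fun r hr z _ => ?_) (fun y z hy hz => ?_)
      · have : (((0:A), r • z) : A × B) = r • ((0:A), z) := by simp
        rw [this]
        exact Submodule.smul_mem_smul hr trivial
      · have : (((0:A), y + z) : A × B) = ((0:A), y) + ((0:A), z) := by simp
        rw [this]
        exact Submodule.add_mem _ hy hz

lemma mapQ_eq_zero_iff {I J : Ideal Rg} (h : J ≤ I ⊔ J) (y : Rg ⧸ J) :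
    Submodule.mapQ (J : Submodule Rg Rg) ((I ⊔ J : Ideal Rg) : Submodule Rg Rg) LinearMap.id
        (by simpa using h) y = 0
      ↔ y ∈ I • (⊤ : Submodule Rg (Rg ⧸ J)) := by
  obtain ⟨z, rfl⟩ := Submodule.Quotient.mk_surjective _ y
  rw [smul_top_quot]
  constructor
  · intro h0
    rw [Submodule.mapQ_apply, LinearMap.id_apply, Submodule.Quotient.mk_eq_zero] at h0
    rcases Submodule.mem_sup.mp h0 with ⟨a, ha, b, hb, hab⟩
    refine ⟨a, ha, ?_⟩
    rw [Submodule.mkQ_apply, Submodule.Quotient.eq]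
    have : a - z = -b := by rw [← hab]; ring
    rw [this]
    exact neg_mem hb
  · rintro ⟨a, ha, hmk⟩
    rw [Submodule.mapQ_apply, LinearMap.id_apply, Submodule.Quotient.mk_eq_zero]
    rw [Submodule.mkQ_apply, Submodule.Quotient.eq] at hmk
    have : z = a - (a - z) := by ring
    rw [this]
    exact Submodule.sub_mem _ (Ideal.mem_sup_left ha) (Submodule.mem_sup_right hmk)

end glue

section finq
variable {Rg : Type*} [CommRing Rg] {A : Type*} [AddCommGroup A] [Module Rg A]

lemma smul_quot_smul_top_eq_zero (I : Ideal Rg) {r : Rg} (hr : r ∈ I)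
    (x : A ⧸ (I • ⊤ : Submodule Rg A)) : r • x = 0 := by
  obtain ⟨z, rfl⟩ := Submodule.Quotient.mk_surjective _ x
  rw [← Submodule.Quotient.mk_smul, Submodule.Quotient.mk_eq_zero]
  exact Submodule.smul_mem_smul hr trivial

lemma finite_quot_smul_top [Module.Finite Rg A] (I : Ideal Rg) [Finite (Rg ⧸ I)] :
    Finite (A ⧸ (I • ⊤ : Submodule Rg A)) := by
  obtain ⟨s, hs⟩ := Module.Finite.fg_top (R := Rg) (M := A)
  set N := (I • ⊤ : Submodule Rg A) with hN
  refine Finite.of_surjective (f := fun c : {x // x ∈ s} → Rg ⧸ I =>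
    ∑ x : {x // x ∈ s}, (c x).out • N.mkQ x.1) ?_
  intro y
  obtain ⟨z, rfl⟩ := N.mkQ_surjective y
  have hz : z ∈ Submodule.span Rg (s : Set A) := hs ▸ Submodule.mem_top
  obtain ⟨c, -, hc⟩ := Submodule.mem_span_finset.mp hz
  refine ⟨fun x => Submodule.Quotient.mk (c x.1), ?_⟩
  have h1 : ∀ x : {x // x ∈ s},
      ((Submodule.Quotient.mk (p := (I : Submodule Rg Rg)) (c x.1)).out) • N.mkQ x.1
        = c x.1 • N.mkQ x.1 := by
    intro x
    have hdiff : ((Submodule.Quotient.mk (p := (I : Submodule Rg Rg)) (c x.1)).out) - c x.1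
        ∈ I := (Submodule.Quotient.eq _).mp (mk_out _)
    have := smul_quot_smul_top_eq_zero (A := A) I hdiff (N.mkQ x.1)
    calc _ = (((Submodule.Quotient.mk (p := (I : Submodule Rg Rg)) (c x.1)).out - c x.1)
          + c x.1) • N.mkQ x.1 := by ring_nf
      _ = c x.1 • N.mkQ x.1 := by rw [add_smul, this, zero_add]
  show (∑ x : {x // x ∈ s},
      (Submodule.Quotient.mk (p := (I : Submodule Rg Rg)) (c x.1)).out • N.mkQ x.1) = N.mkQ z
  rw [Finset.sum_congr rfl (fun x _ => h1 x)]
  have h2 : ∑ x : {x // x ∈ s}, c x.1 • N.mkQ x.1 = N.mkQ z := by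
    rw [← hc, map_sum, Finset.sum_coe_sort s (fun x => c x • N.mkQ x)]
    exact Finset.sum_congr rfl fun x _ => (map_smul N.mkQ (c x) x).symm
  exact h2

end finq

section eside
variable {Rg : Type*} [CommRing Rg] {ρ S T : ℕ}

noncomputable def ESideEquiv (I : Ideal Rg) (Js : Fin S → Ideal Rg) (Pt : Fin T → Ideal Rg) :
    ((((Fin ρ → Rg) × (Π s, Rg ⧸ Js s) × (Π t, Rg ⧸ Pt t)) ⧸
       (I • ⊤ : Submodule Rg ((Fin ρ → Rg) × (Π s, Rg ⧸ Js s) × (Π t, Rg ⧸ Pt t)))) ≃ₗ[Rg]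
     ((Fin ρ → Rg ⧸ I) × (Π s, Rg ⧸ (I ⊔ Js s)) × (Π t, Rg ⧸ (I ⊔ Pt t)))) := by
  set Φa : (Fin ρ → Rg) →ₗ[Rg] (Fin ρ → Rg ⧸ I) :=
    LinearMap.pi (fun i => (I : Submodule Rg Rg).mkQ.comp (LinearMap.proj i)) with hΦa
  set Φb : (Π s, Rg ⧸ Js s) →ₗ[Rg] (Π s, Rg ⧸ (I ⊔ Js s)) :=
    LinearMap.pi (fun s => (Submodule.mapQ (Js s : Submodule Rg Rg)
      ((I ⊔ Js s : Ideal Rg) : Submodule Rg Rg) LinearMap.id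
      (by simpa using (le_sup_right : Js s ≤ I ⊔ Js s))).comp (LinearMap.proj s)) with hΦb
  set Φc : (Π t, Rg ⧸ Pt t) →ₗ[Rg] (Π t, Rg ⧸ (I ⊔ Pt t)) :=
    LinearMap.pi (fun t => (Submodule.mapQ (Pt t : Submodule Rg Rg)
      ((I ⊔ Pt t : Ideal Rg) : Submodule Rg Rg) LinearMap.id
      (by simpa using (le_sup_right : Pt t ≤ I ⊔ Pt t))).comp (LinearMap.proj t)) with hΦc
  set Φ := Φa.prodMap (Φb.prodMap Φc) with hΦ
  have hsurj : Function.Surjective Φ := by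
    have ha : Function.Surjective Φa := by
      intro g
      choose x hx using fun i => Submodule.Quotient.mk_surjective (I : Submodule Rg Rg) (g i)
      exact ⟨x, funext hx⟩
    have hb : Function.Surjective Φb := by
      intro g
      have : ∀ s, ∃ y, (Submodule.mapQ (Js s : Submodule Rg Rg)
          ((I ⊔ Js s : Ideal Rg) : Submodule Rg Rg) LinearMap.id
          (by simpa using (le_sup_right : Js s ≤ I ⊔ Js s))) y = g s := by
        intro s
        obtain ⟨z, hz⟩ := Submodule.Quotient.mk_surjective _ (g s)
        exact ⟨Submodule.Quotient.mk z, by rw [Submodule.mapQ_apply, LinearMap.id_apply, hz]⟩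
      choose y hy using this
      exact ⟨y, funext hy⟩
    have hc : Function.Surjective Φc := by
      intro g
      have : ∀ t, ∃ y, (Submodule.mapQ (Pt t : Submodule Rg Rg)
          ((I ⊔ Pt t : Ideal Rg) : Submodule Rg Rg) LinearMap.id
          (by simpa using (le_sup_right : Pt t ≤ I ⊔ Pt t))) y = g t := by
        intro t
        obtain ⟨z, hz⟩ := Submodule.Quotient.mk_surjective _ (g t)
        exact ⟨Submodule.Quotient.mk z, by rw [Submodule.mapQ_apply, LinearMap.id_apply, hz]⟩
      choose y hy using this
      exact ⟨y, funext hy⟩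
    exact ha.prodMap (hb.prodMap hc)
  have hker : LinearMap.ker Φ = (I • ⊤ : Submodule Rg _) := by
    ext x
    rw [smul_top_prod, Submodule.mem_prod, smul_top_prod, Submodule.mem_prod,
      smul_top_pi, smul_top_pi, smul_top_pi]
    constructor
    · intro hx
      have h0 : Φ x = 0 := hx
      rw [hΦ, LinearMap.prodMap_apply, Prod.mk_eq_zero, LinearMap.prodMap_apply,
        Prod.mk_eq_zero] at h0
      obtain ⟨h1, h2, h3⟩ := h0
      refine ⟨?_, ?_, ?_⟩
      · intro i _
        rw [smul_top_ideal]
        have h4 := congrFun h1 i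
        change Submodule.Quotient.mk (x.1 i) = 0 at h4
        rwa [Submodule.Quotient.mk_eq_zero] at h4
      · intro s _
        exact (mapQ_eq_zero_iff le_sup_right (x.2.1 s)).mp (congrFun h2 s)
      · intro t _
        exact (mapQ_eq_zero_iff le_sup_right (x.2.2 t)).mp (congrFun h3 t)
    · rintro ⟨h1, h2, h3⟩
      show Φ x = 0
      rw [hΦ, LinearMap.prodMap_apply, Prod.mk_eq_zero, LinearMap.prodMap_apply,
        Prod.mk_eq_zero]
      refine ⟨funext fun i => ?_, funext fun s => ?_, funext fun t => ?_⟩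
      · have h4 := h1 i trivial
        rw [smul_top_ideal] at h4
        show Submodule.Quotient.mk (x.1 i) = 0
        rwa [Submodule.Quotient.mk_eq_zero]
      · exact (mapQ_eq_zero_iff le_sup_right (x.2.1 s)).mpr (h2 s trivial)
      · exact (mapQ_eq_zero_iff le_sup_right (x.2.2 t)).mpr (h3 t trivial)
  exact (Submodule.quotEquivOfEq _ _ hker.symm).trans (Φ.quotKerEquivOfSurjective hsurj)

end eside

section pseudo
variable {Rg : Type*} [CommRing Rg] {A M E : Type*} [AddCommGroup A] [Module Rg A]
  [AddCommGroup M] [Module Rg M] [AddCommGroup E] [Module Rg E]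

lemma mem_span_pair_smul_top {a b : Rg} {x : A}
    (hx : x ∈ (Ideal.span {a, b}) • (⊤ : Submodule Rg A)) : ∃ y z : A, a • y + b • z = x := by
  refine Submodule.smul_induction_on hx (fun r hr w _ => ?_) ?_
  · obtain ⟨c, d, hcd⟩ := Ideal.mem_span_pair.mp hr
    refine ⟨c • w, d • w, ?_⟩
    rw [← hcd]
    rw [add_smul]
    simp [smul_smul, mul_comm]
  · rintro x y ⟨x1, x2, rfl⟩ ⟨y1, y2, rfl⟩
    exact ⟨x1 + y1, x2 + y2, by simp [smul_add]; abel⟩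

lemma pseudo_iso_bounds (φ : M →ₗ[Rg] E) (a b : Rg) (I : Ideal Rg)
    (hI : I = Ideal.span {a, b})
    [Finite (LinearMap.ker φ)] [Finite (E ⧸ LinearMap.range φ)]
    [Finite (M ⧸ (I • ⊤ : Submodule Rg M))] [Finite (E ⧸ (I • ⊤ : Submodule Rg E))] :
    Nat.card (E ⧸ (I • ⊤ : Submodule Rg E))
        ≤ Nat.card (E ⧸ LinearMap.range φ) * Nat.card (M ⧸ (I • ⊤ : Submodule Rg M)) ∧
      Nat.card (M ⧸ (I • ⊤ : Submodule Rg M))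
        ≤ Nat.card (LinearMap.ker φ) * Nat.card (E ⧸ LinearMap.range φ) ^ 2
            * Nat.card (E ⧸ (I • ⊤ : Submodule Rg E)) := by
  set N : Submodule Rg M := I • ⊤ with hN
  set N' : Submodule Rg E := I • ⊤ with hN'
  set P : Submodule Rg E := LinearMap.range φ with hP
  have hmapN : Submodule.map φ N = I • P := by
    rw [hN, Submodule.map_smul'', Submodule.map_top]
  have hle : N ≤ Submodule.comap φ N' := by
    intro x hx
    rw [Submodule.mem_comap]
    have : φ x ∈ Submodule.map φ N := Submodule.mem_map_of_mem hx
    rw [hmapN] at this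
    exact Submodule.smul_mono le_rfl le_top this
  set φbar : (M ⧸ N) →ₗ[Rg] (E ⧸ N') := Submodule.mapQ N N' φ hle with hφbar
  have hφbar_apply : ∀ x : M, φbar (N.mkQ x) = N'.mkQ (φ x) := fun x => rfl
  -- coker bound
  have hcoker_le : Nat.card ((E ⧸ N') ⧸ LinearMap.range φbar) ≤ Nat.card (E ⧸ P) := by
    refine Nat.card_le_card_of_surjective
      (fun c : E ⧸ P => Submodule.Quotient.mk (N'.mkQ c.out)) ?_
    intro y
    obtain ⟨u, rfl⟩ := Submodule.Quotient.mk_surjective _ y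
    obtain ⟨e, rfl⟩ := N'.mkQ_surjective u
    refine ⟨Submodule.Quotient.mk e, ?_⟩
    rw [Submodule.Quotient.eq]
    have hout : (Submodule.Quotient.mk (p := P) e).out - e ∈ P :=
      (Submodule.Quotient.eq _).mp (mk_out _)
    obtain ⟨x, hx⟩ := hout
    refine ⟨N.mkQ x, ?_⟩
    rw [hφbar_apply, ← map_sub, hx]
  -- ker bound
  set W : Submodule Rg M := Submodule.comap φ N' with hW
  set s : W →ₗ[Rg] LinearMap.ker φbar :=
    LinearMap.codRestrict (LinearMap.ker φbar) (N.mkQ.comp W.subtype) (fun x => by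
      rw [LinearMap.mem_ker, LinearMap.comp_apply, Submodule.subtype_apply, hφbar_apply,
        Submodule.mkQ_apply, Submodule.Quotient.mk_eq_zero]
      exact x.2) with hs
  have hssurj : Function.Surjective s := by
    rintro ⟨c, hc⟩
    obtain ⟨x, rfl⟩ := N.mkQ_surjective c
    rw [LinearMap.mem_ker, hφbar_apply, Submodule.mkQ_apply,
      Submodule.Quotient.mk_eq_zero] at hc
    exact ⟨⟨x, hc⟩, rfl⟩
  have hkers : ∀ x : W, x ∈ LinearMap.ker s ↔ (x : M) ∈ N := by
    intro x
    rw [LinearMap.mem_ker, hs]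
    constructor
    · intro h
      have := congrArg Subtype.val h
      simpa [Submodule.Quotient.mk_eq_zero] using this
    · intro h
      refine Subtype.ext ?_
      simpa [Submodule.Quotient.mk_eq_zero] using h
  set U : Submodule Rg N' := Submodule.comap N'.subtype (I • P) with hU
  set v : W →ₗ[Rg] (N' ⧸ U) :=
    U.mkQ.comp (LinearMap.codRestrict N' (φ.comp W.subtype) (fun x => x.2)) with hv
  have hvker : LinearMap.ker s ≤ LinearMap.ker v := by
    intro x hx
    rw [hkers] at hx
    rw [LinearMap.mem_ker, hv, LinearMap.comp_apply, Submodule.mkQ_apply,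
      Submodule.Quotient.mk_eq_zero, hU, Submodule.mem_comap]
    rw [← hmapN]
    exact Submodule.mem_map_of_mem hx
  set vbar : (W ⧸ LinearMap.ker s) →ₗ[Rg] (N' ⧸ U) := Submodule.liftQ _ v hvker with hvbar
  -- Finite V via surjection from (E/P) × (E/P)
  have hVsurj : Function.Surjective (fun cc : (E ⧸ P) × (E ⧸ P) =>
      U.mkQ ⟨a • cc.1.out + b • cc.2.out, by
        have ha : a ∈ I := hI ▸ Ideal.subset_span (by simp)
        have hb : b ∈ I := hI ▸ Ideal.subset_span (by simp)
        exact Submodule.add_mem _ (Submodule.smul_mem_smul ha trivial)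
          (Submodule.smul_mem_smul hb trivial)⟩) := by
    intro y
    obtain ⟨u, rfl⟩ := U.mkQ_surjective y
    have hu : (u : E) ∈ Ideal.span {a, b} • (⊤ : Submodule Rg E) := by
      rw [← hI]; exact u.2
    obtain ⟨x1, x2, hx⟩ := mem_span_pair_smul_top hu
    refine ⟨(Submodule.Quotient.mk x1, Submodule.Quotient.mk x2), ?_⟩
    simp only [Submodule.mkQ_apply]
    rw [Submodule.Quotient.eq]
    rw [hU, Submodule.mem_comap]
    have h1 : (Submodule.Quotient.mk (p := P) x1).out - x1 ∈ P :=
      (Submodule.Quotient.eq _).mp (mk_out _)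
    have h2 : (Submodule.Quotient.mk (p := P) x2).out - x2 ∈ P :=
      (Submodule.Quotient.eq _).mp (mk_out _)
    have ha : a ∈ I := hI ▸ Ideal.subset_span (by simp)
    have hb : b ∈ I := hI ▸ Ideal.subset_span (by simp)
    show (a • (Submodule.Quotient.mk (p := P) x1).out
        + b • (Submodule.Quotient.mk (p := P) x2).out) - (u : E) ∈ I • P
    have heq : (a • (Submodule.Quotient.mk (p := P) x1).out
        + b • (Submodule.Quotient.mk (p := P) x2).out) - (u : E)
        = a • ((Submodule.Quotient.mk (p := P) x1).out - x1)
          + b • ((Submodule.Quotient.mk (p := P) x2).out - x2) := by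
      rw [← hx]
      rw [smul_sub, smul_sub]
      abel
    rw [heq]
    exact Submodule.add_mem _ (Submodule.smul_mem_smul ha h1) (Submodule.smul_mem_smul hb h2)
  have hVfin : Finite (N' ⧸ U) := Finite.of_surjective _ hVsurj
  have hVcard : Nat.card (N' ⧸ U) ≤ Nat.card (E ⧸ P) ^ 2 := by
    have := Nat.card_le_card_of_surjective _ hVsurj
    rwa [Nat.card_prod, ← pow_two] at this
  -- ker vbar ≤ #ker φ
  have hzW : ∀ z : LinearMap.ker φ, (z : M) ∈ W := by
    intro z
    rw [hW, Submodule.mem_comap, show φ (z : M) = 0 from z.2]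
    exact zero_mem _
  have hkervbar : Nat.card (LinearMap.ker vbar) ≤ Nat.card (LinearMap.ker φ) := by
    refine Nat.card_le_card_of_surjective (fun z : LinearMap.ker φ =>
      (⟨Submodule.Quotient.mk ⟨z.1, hzW z⟩, by
        rw [LinearMap.mem_ker, hvbar, Submodule.liftQ_apply, hv, LinearMap.comp_apply,
          Submodule.mkQ_apply, Submodule.Quotient.mk_eq_zero, hU, Submodule.mem_comap]
        show φ (z : M) ∈ I • P
        rw [show φ (z : M) = 0 from z.2]
        exact zero_mem _⟩ : LinearMap.ker vbar)) ?_
    rintro ⟨y, hy⟩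
    obtain ⟨x, rfl⟩ := Submodule.Quotient.mk_surjective _ y
    rw [LinearMap.mem_ker, hvbar, Submodule.liftQ_apply, hv, LinearMap.comp_apply,
      Submodule.mkQ_apply, Submodule.Quotient.mk_eq_zero, hU, Submodule.mem_comap] at hy
    have hy' : φ (x : M) ∈ I • P := hy
    rw [← hmapN] at hy'
    obtain ⟨w', hw'N, hw'⟩ := hy'
    refine ⟨⟨x.1 - w', by rw [LinearMap.mem_ker, map_sub, hw', sub_self]⟩, ?_⟩
    refine Subtype.ext ?_
    simp only
    rw [Submodule.Quotient.eq]
    rw [hkers]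
    simpa using Submodule.neg_mem _ hw'N
  -- assemble ker bound
  have hkerφbar_card : Nat.card (LinearMap.ker φbar)
      ≤ Nat.card (LinearMap.ker φ) * Nat.card (E ⧸ P) ^ 2 := by
    haveI : Finite (LinearMap.ker φbar) := Subtype.finite
    have e1 := s.quotKerEquivOfSurjective hssurj
    haveI : Finite (W ⧸ LinearMap.ker s) := Finite.of_equiv _ e1.symm.toEquiv
    rw [← Nat.card_congr e1.toEquiv]
    rw [card_eq_card_quotient_mul_card (LinearMap.ker vbar)]
    have h1 : Nat.card ((W ⧸ LinearMap.ker s) ⧸ LinearMap.ker vbar) ≤ Nat.card (N' ⧸ U) := by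
      rw [Nat.card_congr vbar.quotKerEquivRange.toEquiv]
      exact Nat.card_le_card_of_injective _ Subtype.val_injective
    calc Nat.card ((W ⧸ LinearMap.ker s) ⧸ LinearMap.ker vbar) * Nat.card (LinearMap.ker vbar)
        ≤ Nat.card (N' ⧸ U) * Nat.card (LinearMap.ker φ) :=
          Nat.mul_le_mul h1 hkervbar
      _ ≤ Nat.card (E ⧸ P) ^ 2 * Nat.card (LinearMap.ker φ) :=
          Nat.mul_le_mul hVcard le_rfl
      _ = Nat.card (LinearMap.ker φ) * Nat.card (E ⧸ P) ^ 2 := mul_comm _ _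
  constructor
  · calc Nat.card (E ⧸ N')
        ≤ Nat.card ((E ⧸ N') ⧸ LinearMap.range φbar) * Nat.card (M ⧸ N) :=
          card_le_coker_mul_card φbar
      _ ≤ Nat.card (E ⧸ P) * Nat.card (M ⧸ N) := Nat.mul_le_mul hcoker_le le_rfl
  · calc Nat.card (M ⧸ N)
        ≤ Nat.card (LinearMap.ker φbar) * Nat.card (E ⧸ N') := card_le_ker_mul_card φbar
      _ ≤ Nat.card (LinearMap.ker φ) * Nat.card (E ⧸ P) ^ 2 * Nat.card (E ⧸ N') :=
          Nat.mul_le_mul hkerφbar_card le_rfl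

end pseudo

open Stmt14Aux

set_option maxHeartbeats 4000000 in
set_option synthInstance.maxHeartbeats 1000000 in
open PowerSeries in
/-- Let `M` be a finitely generated module over `Λ = ℤ_p[[T]]`
pseudo-isomorphic to `Λ^ρ ⊕ ⊕_s Λ/f_s^{l_s}Λ ⊕ ⊕_t Λ/p^{m_t}Λ` with each `f_s`
distinguished.  Then for all `m, n ≥ 0`, `#(M/(p^m, (T+1)^{p^n} − 1)M)` equals
`p^{(ρ m + Σ_t min(m_t, m)) p^n}` up to a multiplicative constant depending only on
`M` and `m` (independent of `n`). -/
theorem stmt14 (p : ℕ) [Fact p.Prime] (M : Type*) [AddCommGroup M]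
    [Module (PowerSeries ℤ_[p]) M] [Module.Finite (PowerSeries ℤ_[p]) M]
    (ρ S T : ℕ) (f : Fin S → Polynomial ℤ_[p]) (hf : ∀ s, (f s).Monic)
    (hdist : ∀ s, ∀ i < (f s).natDegree, (p : ℤ_[p]) ∣ (f s).coeff i)
    (ls : Fin S → ℕ) (hls : ∀ s, 0 < ls s) (mt : Fin T → ℕ) (hmt : ∀ t, 0 < mt t)
    (φ : M →ₗ[PowerSeries ℤ_[p]]
      ((Fin ρ → PowerSeries ℤ_[p]) ×
       (Π s : Fin S, PowerSeries ℤ_[p] ⧸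
          Ideal.span {((f s : PowerSeries ℤ_[p])) ^ ls s}) ×
       (Π t : Fin T, PowerSeries ℤ_[p] ⧸
          Ideal.span {(p : PowerSeries ℤ_[p]) ^ mt t})))
    (hker : Finite (LinearMap.ker φ))
    (hcoker : Finite ((((Fin ρ → PowerSeries ℤ_[p]) ×
       (Π s : Fin S, PowerSeries ℤ_[p] ⧸
          Ideal.span {((f s : PowerSeries ℤ_[p])) ^ ls s}) ×
       (Π t : Fin T, PowerSeries ℤ_[p] ⧸
          Ideal.span {(p : PowerSeries ℤ_[p]) ^ mt t}))) ⧸ LinearMap.range φ))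
    (m : ℕ) :
    ∃ c₁ c₂ : ℝ, 0 < c₁ ∧ 0 < c₂ ∧ ∀ n : ℕ,
      c₁ * (p : ℝ) ^ ((ρ * m + ∑ t, min (mt t) m) * p ^ n) ≤
        (Nat.card (M ⧸ (Ideal.span {(p : PowerSeries ℤ_[p]) ^ m,
            ((PowerSeries.X + 1) ^ (p ^ n) - 1 : PowerSeries ℤ_[p])} •
          (⊤ : Submodule (PowerSeries ℤ_[p]) M))) : ℝ) ∧
      (Nat.card (M ⧸ (Ideal.span {(p : PowerSeries ℤ_[p]) ^ m,
            ((PowerSeries.X + 1) ^ (p ^ n) - 1 : PowerSeries ℤ_[p])} •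
          (⊤ : Submodule (PowerSeries ℤ_[p]) M))) : ℝ) ≤
        c₂ * (p : ℝ) ^ ((ρ * m + ∑ t, min (mt t) m) * p ^ n) := by
  classical
  have hp : p.Prime := Fact.out
  haveI := hker
  haveI := hcoker
  have hshape : ∀ s : Fin S, ∃ ε' : PowerSeries ℤ_[p],
      ((f s : PowerSeries ℤ_[p])) ^ ls s
        = X ^ ((f s).natDegree * ls s) + C (p:ℤ_[p]) * ε' := by
    intro s
    obtain ⟨ε, hε⟩ := L1b (f s) (hf s) (hdist s)
    exact L1c _ ε _ hε (ls s)
  choose εs hεs using hshape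
  set D : Fin S → ℕ := fun s => (f s).natDegree * ls s with hD
  set Cf : ℕ := ∏ s, p ^ (m * D s) with hCfdef
  set K : ℕ := Nat.card (LinearMap.ker φ) with hKdef
  set Cc : ℕ := Nat.card ((((Fin ρ → PowerSeries ℤ_[p]) ×
       (Π s : Fin S, PowerSeries ℤ_[p] ⧸
          Ideal.span {((f s : PowerSeries ℤ_[p])) ^ ls s}) ×
       (Π t : Fin T, PowerSeries ℤ_[p] ⧸
          Ideal.span {(p : PowerSeries ℤ_[p]) ^ mt t}))) ⧸ LinearMap.range φ) with hCcdef
  have hKpos : 0 < K := Nat.card_pos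
  have hCcpos : 0 < Cc := Nat.card_pos
  have hCfpos : 0 < Cf := Finset.prod_pos fun s _ => pow_pos hp.pos _
  refine ⟨1 / (Cc : ℝ), (K : ℝ) * (Cc : ℝ) ^ 2 * (Cf : ℝ), by positivity, by positivity,
    fun n => ?_⟩
  obtain ⟨ε, hω⟩ := L1 (p := p) n
  set I : Ideal (PowerSeries ℤ_[p]) := Ideal.span {(p : PowerSeries ℤ_[p]) ^ m,
      ((PowerSeries.X + 1) ^ (p ^ n) - 1 : PowerSeries ℤ_[p])} with hIdef
  set Js : Fin S → Ideal (PowerSeries ℤ_[p]) :=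
    fun s => Ideal.span {((f s : PowerSeries ℤ_[p])) ^ ls s} with hJsdef
  set Pt : Fin T → Ideal (PowerSeries ℤ_[p]) :=
    fun t => Ideal.span {(p : PowerSeries ℤ_[p]) ^ mt t} with hPtdef
  have hIform : I = Ideal.span {(p : PowerSeries ℤ_[p]) ^ m,
      X ^ (p ^ n) + C (p:ℤ_[p]) * ε} := by rw [hIdef, hω]
  have cardI : Nat.card (PowerSeries ℤ_[p] ⧸ I) = p ^ (m * p ^ n) := by
    rw [hIform]
    exact quot_card _ _ _
  have finI : Finite (PowerSeries ℤ_[p] ⧸ I) := by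
    rw [hIform]
    exact quot_finite _ _ _
  have hsupT : ∀ t, (I ⊔ Pt t : Ideal (PowerSeries ℤ_[p]))
      = Ideal.span {(p : PowerSeries ℤ_[p]) ^ (min (mt t) m),
          X ^ (p ^ n) + C (p:ℤ_[p]) * ε} := by
    intro t
    rw [hIdef, hPtdef, span_sup_singleton, span_three_pow, hω]
  have cardT : ∀ t, Nat.card (PowerSeries ℤ_[p] ⧸ (I ⊔ Pt t))
      = p ^ (min (mt t) m * p ^ n) := by
    intro t
    rw [hsupT t]
    exact quot_card _ _ _
  haveI finT : ∀ t, Finite (PowerSeries ℤ_[p] ⧸ (I ⊔ Pt t)) := by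
    intro t
    rw [hsupT t]
    exact quot_finite _ _ _
  have hSsub : ∀ s, Ideal.span {(p : PowerSeries ℤ_[p]) ^ m,
      ((f s : PowerSeries ℤ_[p])) ^ ls s} ≤ I ⊔ Js s := by
    intro s
    rw [Ideal.span_le]
    rintro g hg
    simp only [Set.mem_insert_iff, Set.mem_singleton_iff] at hg
    rcases hg with rfl | rfl
    · exact Ideal.mem_sup_left (Ideal.subset_span (by simp))
    · exact Ideal.mem_sup_right (Ideal.subset_span (by simp [hJsdef]))
  have hSsurj : ∀ s, Function.Surjective (Ideal.Quotient.factor (hSsub s)) := by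
    intro s y
    obtain ⟨x, rfl⟩ := Ideal.Quotient.mk_surjective y
    exact ⟨Ideal.Quotient.mk _ x, Ideal.Quotient.factor_mk (hSsub s) x⟩
  haveI finSrc : ∀ s, Finite (PowerSeries ℤ_[p] ⧸ Ideal.span {(p : PowerSeries ℤ_[p]) ^ m,
      ((f s : PowerSeries ℤ_[p])) ^ ls s}) := by
    intro s
    rw [hεs s]
    exact quot_finite _ _ _
  haveI finS : ∀ s, Finite (PowerSeries ℤ_[p] ⧸ (I ⊔ Js s)) :=
    fun s => Finite.of_surjective _ (hSsurj s)
  have cardS_le : ∀ s, Nat.card (PowerSeries ℤ_[p] ⧸ (I ⊔ Js s)) ≤ p ^ (m * D s) := by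
    intro s
    have h1 := Nat.card_le_card_of_surjective _ (hSsurj s)
    have h2 : Nat.card (PowerSeries ℤ_[p] ⧸ Ideal.span {(p : PowerSeries ℤ_[p]) ^ m,
        ((f s : PowerSeries ℤ_[p])) ^ ls s}) = p ^ (m * D s) := by
      rw [hεs s]
      exact quot_card _ _ _
    rw [h2] at h1
    exact h1
  have cardS_pos : ∀ s, 0 < Nat.card (PowerSeries ℤ_[p] ⧸ (I ⊔ Js s)) :=
    fun s => Nat.card_pos
  -- E-side equivalence and cardinality
  have eqE := ESideEquiv (ρ := ρ) I Js Pt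
  set cS : ℕ := ∏ s, Nat.card (PowerSeries ℤ_[p] ⧸ (I ⊔ Js s)) with hcSdef
  have cardE : Nat.card ((((Fin ρ → PowerSeries ℤ_[p]) ×
       (Π s : Fin S, PowerSeries ℤ_[p] ⧸ Js s) ×
       (Π t : Fin T, PowerSeries ℤ_[p] ⧸ Pt t))) ⧸
        (I • ⊤ : Submodule (PowerSeries ℤ_[p]) ((Fin ρ → PowerSeries ℤ_[p]) ×
       (Π s : Fin S, PowerSeries ℤ_[p] ⧸ Js s) ×
       (Π t : Fin T, PowerSeries ℤ_[p] ⧸ Pt t))))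
      = p ^ ((ρ * m + ∑ t, min (mt t) m) * p ^ n) * cS := by
    rw [Nat.card_congr eqE.toEquiv, Nat.card_prod, Nat.card_prod, Nat.card_pi, Nat.card_pi,
      Nat.card_pi]
    have e1 : ∏ _i : Fin ρ, Nat.card (PowerSeries ℤ_[p] ⧸ I) = p ^ (ρ * (m * p ^ n)) := by
      rw [Finset.prod_const, cardI, ← pow_mul]
      congr 1
      simp [mul_comm]
    have e2 : ∏ t, Nat.card (PowerSeries ℤ_[p] ⧸ (I ⊔ Pt t))
        = p ^ (∑ t, min (mt t) m * p ^ n) := by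
      rw [Finset.prod_congr rfl fun t _ => cardT t, Finset.prod_pow_eq_pow_sum]
    rw [e1, e2, hcSdef,
      show ∑ t, min (mt t) m * p ^ n = (∑ t, min (mt t) m) * p ^ n from
        (Finset.sum_mul _ _ _).symm]
    ring
  -- finiteness of the two quotients
  haveI finEq : Finite ((((Fin ρ → PowerSeries ℤ_[p]) ×
       (Π s : Fin S, PowerSeries ℤ_[p] ⧸ Js s) ×
       (Π t : Fin T, PowerSeries ℤ_[p] ⧸ Pt t))) ⧸
        (I • ⊤ : Submodule (PowerSeries ℤ_[p]) ((Fin ρ → PowerSeries ℤ_[p]) ×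
       (Π s : Fin S, PowerSeries ℤ_[p] ⧸ Js s) ×
       (Π t : Fin T, PowerSeries ℤ_[p] ⧸ Pt t)))) := Finite.of_equiv _ eqE.symm.toEquiv
  haveI finMq : Finite (M ⧸ (I • ⊤ : Submodule (PowerSeries ℤ_[p]) M)) :=
    finite_quot_smul_top I
  obtain ⟨hlow, hhigh⟩ := pseudo_iso_bounds φ ((p : PowerSeries ℤ_[p]) ^ m)
    ((PowerSeries.X + 1) ^ (p ^ n) - 1) I hIdef
  -- numeric conclusion
  set Pn : ℕ := p ^ ((ρ * m + ∑ t, min (mt t) m) * p ^ n) with hPndef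
  set Xn : ℕ := Nat.card (M ⧸ (I • ⊤ : Submodule (PowerSeries ℤ_[p]) M)) with hXndef
  set En : ℕ := Nat.card ((((Fin ρ → PowerSeries ℤ_[p]) ×
       (Π s : Fin S, PowerSeries ℤ_[p] ⧸ Js s) ×
       (Π t : Fin T, PowerSeries ℤ_[p] ⧸ Pt t))) ⧸
        (I • ⊤ : Submodule (PowerSeries ℤ_[p]) ((Fin ρ → PowerSeries ℤ_[p]) ×
       (Π s : Fin S, PowerSeries ℤ_[p] ⧸ Js s) ×
       (Π t : Fin T, PowerSeries ℤ_[p] ⧸ Pt t)))) with hEndef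
  have hcS1 : 1 ≤ cS := Finset.prod_pos (fun s _ => cardS_pos s)
  have hcSCf : cS ≤ Cf := Finset.prod_le_prod (fun s _ => Nat.zero_le _)
    (fun s _ => cardS_le s)
  have hPnEn : Pn ≤ En := by
    rw [cardE]
    exact Nat.le_mul_of_pos_right _ hcS1
  have hEnCf : En ≤ Pn * Cf := by
    rw [cardE]
    exact Nat.mul_le_mul le_rfl hcSCf
  have hlow' : Pn ≤ Cc * Xn := le_trans hPnEn hlow
  have hhigh' : Xn ≤ K * Cc ^ 2 * Cf * Pn := by
    calc Xn ≤ K * Cc ^ 2 * En := hhigh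
      _ ≤ K * Cc ^ 2 * (Pn * Cf) := Nat.mul_le_mul le_rfl hEnCf
      _ = K * Cc ^ 2 * Cf * Pn := by ring
  have hPncast : ((Pn : ℕ) : ℝ) = (p : ℝ) ^ ((ρ * m + ∑ t, min (mt t) m) * p ^ n) := by
    rw [hPndef]
    push_cast
    ring
  constructor
  · rw [← hPncast]
    rw [div_mul_eq_mul_div, div_le_iff₀ (by exact_mod_cast hCcpos)]
    have := (Nat.cast_le (α := ℝ)).mpr hlow'
    push_cast at this ⊢
    nlinarith [this]
  · rw [← hPncast]
    have := (Nat.cast_le (α := ℝ)).mpr hhigh'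
    push_cast at this ⊢
    nlinarith [this]
end
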